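/- Let Q > R ≥ 1, ℓ ≥ 1, and n ≥ ℓ be integers, Σ a finite alphabet with |Σ| = Q, and Σ' ⊆ Σ with |Σ'| = R. Set x = (R/Q)^ℓ·(1 + (1 − R/Q)·(n−ℓ)). If x < 1, then the redundancy satisfies red(RLL_{Q,R}(ℓ,n)) ≤ log_Q(e) · x/(1 − x). -/

import Mathlib

open Finset Real

/-- A sequence `x ∈ Σⁿ` is `ℓ`-run-length-limited if every window of `ℓ`
consecutive symbols contains at least one symbol outside `S'`. -/
def IsRLL {σ : Type*} (S' : Finset σ) (ℓ : ℕ) {n : ℕ} (x : Fin n → σ) : Prop :=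
  ∀ i : ℕ, (h : i + ℓ ≤ n) → ∃ k : ℕ, ∃ hk : k < ℓ, x ⟨i + k, by omega⟩ ∉ S'

/-- Constraint sets for the event "window starting at `i` is all in `S'`,
and (if `i > 0`) the symbol just before the window is not in `S'`. -/
def rllT {σ : Type*} [Fintype σ] [DecidableEq σ] (S' : Finset σ) (ℓ i n : ℕ) :
    Fin n → Finset σ :=
  fun j => if i ≤ (j : ℕ) ∧ (j : ℕ) < i + ℓ then S'
    else if (j : ℕ) + 1 = i then S'ᶜ else Finset.univ

lemma rll_prod_card {σ : Type*} [Fintype σ] [DecidableEq σ] (Q R ℓ n : ℕ)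
    (hℓ : 1 ≤ ℓ) (hσ : Fintype.card σ = Q) (S' : Finset σ) (hS' : S'.card = R)
    (i : ℕ) (hi : i + ℓ ≤ n) :
    ∏ j : Fin n, (rllT S' ℓ i n j).card =
      if i = 0 then R ^ ℓ * Q ^ (n - ℓ) else R ^ ℓ * ((Q - R) * Q ^ (n - ℓ - 1)) := by
  have hcard : ∀ j : Fin n, (rllT S' ℓ i n j).card =
      (fun m : ℕ => if i ≤ m ∧ m < i + ℓ then R else if m + 1 = i then Q - R else Q) (j : ℕ) := by
    intro j
    simp only [rllT]
    split_ifs with h1 h2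
    · exact hS'
    · rw [Finset.card_compl, hS', hσ]
    · rw [Finset.card_univ, hσ]
  rw [Finset.prod_congr rfl (fun j _ => hcard j),
    Fin.prod_univ_eq_prod_range
      (fun m : ℕ => if i ≤ m ∧ m < i + ℓ then R else if m + 1 = i then Q - R else Q) n]
  rw [Finset.prod_ite, Finset.prod_const, Finset.prod_ite, Finset.prod_const,
    Finset.prod_const]
  have hA : (range n).filter (fun m => i ≤ m ∧ m < i + ℓ) = Finset.Ico i (i + ℓ) := by
    ext m; simp only [mem_filter, mem_range, Finset.mem_Ico]; omega
  have hAcard : ((range n).filter (fun m => i ≤ m ∧ m < i + ℓ)).card = ℓ := by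
    rw [hA, Nat.card_Ico]; omega
  rcases Nat.eq_zero_or_pos i with hi0 | hi0
  · subst hi0
    have hB : ((range n).filter (fun m => ¬(0 ≤ m ∧ m < 0 + ℓ))).filter
        (fun m => m + 1 = 0) = ∅ := by
      ext m; simp
    have hC : ((range n).filter (fun m => ¬(0 ≤ m ∧ m < 0 + ℓ))).filter
        (fun m => ¬(m + 1 = 0)) = Finset.Ico ℓ n := by
      ext m; simp only [mem_filter, mem_range, Finset.mem_Ico]; omega
    simp only [if_pos rfl, hAcard, hB, hC, Finset.card_empty, pow_zero, one_mul,
      Nat.card_Ico, if_true]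
  · have hine : ¬ i = 0 := by omega
    have hB : ((range n).filter (fun m => ¬(i ≤ m ∧ m < i + ℓ))).filter
        (fun m => m + 1 = i) = {i - 1} := by
      ext m; simp only [mem_filter, mem_range, Finset.mem_singleton]; omega
    have h1 : ((range n).filter (fun m => ¬(i ≤ m ∧ m < i + ℓ))).card = n - ℓ := by
      have := Finset.card_filter_add_card_filter_not
        (s := range n) (p := fun m => i ≤ m ∧ m < i + ℓ)
      rw [hAcard, Finset.card_range] at this; omega
    have h2 : (((range n).filter (fun m => ¬(i ≤ m ∧ m < i + ℓ))).filter
        (fun m => ¬(m + 1 = i))).card = n - ℓ - 1 := by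
      have := Finset.card_filter_add_card_filter_not
        (s := (range n).filter (fun m => ¬(i ≤ m ∧ m < i + ℓ))) (p := fun m => m + 1 = i)
      rw [hB, h1, Finset.card_singleton] at this; omega
    simp only [if_neg hine, hAcard, hB, h2, Finset.card_singleton, pow_one]

lemma rll_count {σ : Type*} [Fintype σ] [DecidableEq σ] (Q R ℓ n : ℕ)
    (hℓ : 1 ≤ ℓ) (hn : ℓ ≤ n) (hσ : Fintype.card σ = Q) (S' : Finset σ)
    (hS' : S'.card = R) :
    Q ^ n ≤ {x : Fin n → σ | IsRLL S' ℓ x}.ncard +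
      (R ^ ℓ * Q ^ (n - ℓ) + (n - ℓ) * (R ^ ℓ * ((Q - R) * Q ^ (n - ℓ - 1)))) := by
  classical
  have hn0 : 0 < n := by omega
  -- identify ncard with a filter card
  have hG : {x : Fin n → σ | IsRLL S' ℓ x}.ncard =
      (Finset.univ.filter (fun x : Fin n → σ => IsRLL S' ℓ x)).card := by
    rw [← Set.ncard_coe_finset]; congr 1; ext x; simp
  -- the bad set is covered by the union of events
  have hsub : (Finset.univ.filter (fun x : Fin n → σ => ¬ IsRLL S' ℓ x)) ⊆
      (range (n - ℓ + 1)).biUnion (fun i => Fintype.piFinset (rllT S' ℓ i n)) := by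
    intro x hx
    rw [Finset.mem_filter] at hx
    have hbad := hx.2
    -- a total version of x
    set y : ℕ → σ := fun m => if h : m < n then x ⟨m, h⟩ else x ⟨0, hn0⟩ with hy
    have hyx : ∀ (m : ℕ) (h : m < n), y m = x ⟨m, h⟩ := by
      intro m h; simp [hy, dif_pos h]
    set P : ℕ → Prop := fun i => i + ℓ ≤ n ∧ ∀ k, k < ℓ → y (i + k) ∈ S' with hP
    have hex : ∃ i, P i := by
      unfold IsRLL at hbad
      push_neg at hbad
      obtain ⟨i, h, hall⟩ := hbad
      refine ⟨i, h, fun k hk => ?_⟩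
      have hik : i + k < n := by omega
      rw [hyx (i + k) hik]
      exact hall k hk
    set i₀ := Nat.find hex with hi₀
    have hspec : P i₀ := Nat.find_spec hex
    rw [Finset.mem_biUnion]
    refine ⟨i₀, by rw [mem_range]; omega, ?_⟩
    rw [Fintype.mem_piFinset]
    intro j
    simp only [rllT]
    split_ifs with h1 h2
    · have hk : (j : ℕ) - i₀ < ℓ := by omega
      have := hspec.2 ((j : ℕ) - i₀) hk
      have hj : i₀ + ((j : ℕ) - i₀) = (j : ℕ) := by omega
      rw [hj, hyx (j : ℕ) j.isLt] at this
      simpa using this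
    · rw [Finset.mem_compl]
      intro hmem
      have hPj : P (j : ℕ) := by
        constructor
        · omega
        · intro k hk
          rcases Nat.eq_zero_or_pos k with hk0 | hk0
          · subst hk0
            rw [Nat.add_zero, hyx (j : ℕ) j.isLt]
            simpa using hmem
          · have hk1 : k - 1 < ℓ := by omega
            have := hspec.2 (k - 1) hk1
            have hj : i₀ + (k - 1) = (j : ℕ) + k := by omega
            rwa [hj] at this
      exact absurd hPj (Nat.find_min hex (by omega))
    · exact Finset.mem_univ _
  -- cardinality bookkeeping
  have hsplit := Finset.card_filter_add_card_filter_not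
    (s := (Finset.univ : Finset (Fin n → σ))) (p := fun x => IsRLL S' ℓ x)
  have huniv : (Finset.univ : Finset (Fin n → σ)).card = Q ^ n := by
    rw [Finset.card_univ, Fintype.card_fun, hσ, Fintype.card_fin]
  have hbadle : (Finset.univ.filter (fun x : Fin n → σ => ¬ IsRLL S' ℓ x)).card ≤
      R ^ ℓ * Q ^ (n - ℓ) + (n - ℓ) * (R ^ ℓ * ((Q - R) * Q ^ (n - ℓ - 1))) := by
    calc (Finset.univ.filter (fun x : Fin n → σ => ¬ IsRLL S' ℓ x)).card
        ≤ ((range (n - ℓ + 1)).biUnion (fun i => Fintype.piFinset (rllT S' ℓ i n))).card :=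
          Finset.card_le_card hsub
      _ ≤ ∑ i ∈ range (n - ℓ + 1), (Fintype.piFinset (rllT S' ℓ i n)).card :=
          Finset.card_biUnion_le
      _ = ∑ i ∈ range (n - ℓ + 1),
            (if i = 0 then R ^ ℓ * Q ^ (n - ℓ) else R ^ ℓ * ((Q - R) * Q ^ (n - ℓ - 1))) := by
          refine Finset.sum_congr rfl (fun i hi => ?_)
          rw [mem_range] at hi
          rw [Fintype.card_piFinset]
          exact rll_prod_card Q R ℓ n hℓ hσ S' hS' i (by omega)
      _ = R ^ ℓ * Q ^ (n - ℓ) + (n - ℓ) * (R ^ ℓ * ((Q - R) * Q ^ (n - ℓ - 1))) := by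
          rw [Finset.sum_range_succ']
          simp [Finset.sum_const]
          ring
  rw [hG]
  omega

/-- Redundancy upper bound from the union bound. -/
theorem rll_redundancy_union_bound {σ : Type*} [Fintype σ] (Q R ℓ n : ℕ)
    (hR : 1 ≤ R) (hQR : R < Q) (hℓ : 1 ≤ ℓ) (hn : ℓ ≤ n)
    (hσ : Fintype.card σ = Q) (S' : Finset σ) (hS' : S'.card = R)
    (hx : ((R : ℝ) / Q) ^ ℓ * (1 + (1 - (R : ℝ) / Q) * ((n : ℝ) - (ℓ : ℝ))) < 1) :
    (n : ℝ) - Real.logb Q ({x : Fin n → σ | IsRLL S' ℓ x}.ncard) ≤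
      Real.logb Q (Real.exp 1) *
        (((R : ℝ) / Q) ^ ℓ * (1 + (1 - (R : ℝ) / Q) * ((n : ℝ) - (ℓ : ℝ))) /
          (1 - ((R : ℝ) / Q) ^ ℓ * (1 + (1 - (R : ℝ) / Q) * ((n : ℝ) - (ℓ : ℝ))))) := by
  classical
  set X : ℝ := ((R : ℝ) / Q) ^ ℓ * (1 + (1 - (R : ℝ) / Q) * ((n : ℝ) - (ℓ : ℝ))) with hX
  set G : ℕ := {x : Fin n → σ | IsRLL S' ℓ x}.ncard with hGdef
  have hQ2 : 2 ≤ Q := by omega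
  have hQ1 : (1 : ℝ) < Q := by exact_mod_cast (by omega : 1 < Q)
  have hQ0 : (0 : ℝ) < Q := by linarith
  have hp0 : (0 : ℝ) ≤ (R : ℝ) / Q := by positivity
  have hp1 : (R : ℝ) / Q < 1 := by
    rw [div_lt_one hQ0]; exact_mod_cast hQR
  have hnl : (0 : ℝ) ≤ (n : ℝ) - (ℓ : ℝ) := by
    have : (ℓ : ℝ) ≤ n := by exact_mod_cast hn
    linarith
  have hX0 : 0 ≤ X := by
    rw [hX]
    apply mul_nonneg (pow_nonneg hp0 _)
    nlinarith
  -- cast the counting bound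
  have hcount := rll_count Q R ℓ n hℓ hn hσ S' hS'
  have hScast : ((R ^ ℓ * Q ^ (n - ℓ) + (n - ℓ) * (R ^ ℓ * ((Q - R) * Q ^ (n - ℓ - 1))) : ℕ) : ℝ)
      = (Q : ℝ) ^ n * X := by
    rcases Nat.lt_or_ge ℓ n with hlt | hge
    · obtain ⟨k, rfl⟩ : ∃ k, n = ℓ + k + 1 := ⟨n - ℓ - 1, by omega⟩
      have e1 : ℓ + k + 1 - ℓ = k + 1 := by omega
      have e2 : ℓ + k + 1 - ℓ - 1 = k := by omega
      rw [hX, e1]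
      simp only [Nat.add_sub_cancel]
      push_cast [Nat.cast_sub hQR.le]
      have hQne : (Q : ℝ) ≠ 0 := ne_of_gt hQ0
      rw [div_pow]
      field_simp
      ring
    · have hEq : n = ℓ := by omega
      subst hEq
      simp only [Nat.sub_self, pow_zero, mul_one, Nat.zero_mul, Nat.add_zero, hX]
      push_cast
      rw [div_pow, sub_self, mul_zero, add_zero, mul_one]
      field_simp
  have hGge : (Q : ℝ) ^ n * (1 - X) ≤ (G : ℝ) := by
    have h1 : ((Q ^ n : ℕ) : ℝ) ≤ ((G + (R ^ ℓ * Q ^ (n - ℓ) + (n - ℓ) * (R ^ ℓ * ((Q - R) * Q ^ (n - ℓ - 1)))) : ℕ) : ℝ) := by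
      exact_mod_cast hcount
    rw [Nat.cast_add, hScast] at h1
    push_cast at h1 ⊢
    nlinarith [pow_pos hQ0 n]
  have hQnpos : (0 : ℝ) < (Q : ℝ) ^ n := pow_pos hQ0 n
  have h1X : 0 < 1 - X := by linarith
  have hGpos : (0 : ℝ) < (G : ℝ) := lt_of_lt_of_le (by positivity) hGge
  have hlogQ : 0 < Real.log Q := Real.log_pos hQ1
  -- lower bound on logb Q G
  have hlogbG : (n : ℝ) + Real.logb Q (1 - X) ≤ Real.logb Q G := by
    have := Real.logb_le_logb_of_le (b := Q) hQ1 (by positivity) hGge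
    rw [Real.logb_mul (ne_of_gt hQnpos) (ne_of_gt h1X), Real.logb_pow,
      Real.logb_self_eq_one hQ1] at this
    linarith
  -- -log(1-X) ≤ X/(1-X)
  have hkey : -Real.log (1 - X) ≤ X / (1 - X) := by
    have h2 := Real.add_one_le_exp (X / (1 - X))
    have h3 : X / (1 - X) + 1 = 1 / (1 - X) := by field_simp; ring
    rw [h3] at h2
    have h4 : Real.log (1 / (1 - X)) ≤ Real.log (Real.exp (X / (1 - X))) :=
      Real.log_le_log (by positivity) h2
    rw [Real.log_exp, one_div, Real.log_inv] at h4
    linarith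
  have hlogbe : Real.logb Q (Real.exp 1) = 1 / Real.log Q := by
    rw [Real.logb, Real.log_exp]
  rw [hlogbe]
  have hfinal : (n : ℝ) - Real.logb Q G ≤ -Real.logb Q (1 - X) := by linarith
  calc (n : ℝ) - Real.logb Q G ≤ -Real.logb Q (1 - X) := hfinal
    _ = (-Real.log (1 - X)) / Real.log Q := by rw [Real.logb]; ring
    _ ≤ (X / (1 - X)) / Real.log Q := by gcongr
    _ = 1 / Real.log Q * (X / (1 - X)) := by ring
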